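/- Let n ≥ 1 and m : Fin n → Fin n → ℝ, and define the bilinear model f(x) = ∑_{j} ∑_{k} m_{jk}·x_j·x_k. Then for all points a, b ∈ ℝⁿ and every feature i, the interventional Shapley attribution with explanation point b and reference point a is given in closed form by BS_i(f,b,a) = (b_i − a_i) · ∑_{j} (m_{ij} + m_{ji})·(a_j + b_j)/2. -/

import Mathlib

def patch {n : ℕ} (x r : Fin n → ℝ) (S : Finset (Fin n)) : Fin n → ℝ :=
  fun j => if j ∈ S then x j else r j

noncomputable def BS {n : ℕ} (f : (Fin n → ℝ) → ℝ) (x r : Fin n → ℝ) (i : Fin n) : ℝ :=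
  ∑ S ∈ (Finset.univ.erase i).powerset,
    ((S.card.factorial * (n - S.card - 1).factorial : ℝ) / (n.factorial : ℝ)) *
      (f (patch x r (insert i S)) - f (patch x r S))

/-! ### Auxiliary combinatorial lemmas -/

lemma sum_powerset_card {α : Type*} [DecidableEq α] (D : Finset α) (g : ℕ → ℝ) :
    ∑ S ∈ D.powerset, g S.card
      = ∑ j ∈ Finset.range (D.card + 1), (D.card.choose j : ℝ) * g j := by
  rw [Finset.sum_powerset]
  refine Finset.sum_congr rfl fun j hj => ?_
  have h1 : ∑ S ∈ Finset.powersetCard j D, g S.card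
      = ∑ S ∈ Finset.powersetCard j D, g j :=
    Finset.sum_congr rfl fun S hS => by rw [(Finset.mem_powersetCard.mp hS).2]
  rw [h1, Finset.sum_const, Finset.card_powersetCard, nsmul_eq_mul]

lemma gauss_sum (N : ℕ) :
    ∑ j ∈ Finset.range (N + 1), ((j : ℝ) + 1) = (N + 1) * (N + 2) / 2 := by
  induction N with
  | zero => norm_num
  | succ K ih => rw [Finset.sum_range_succ, ih]; push_cast; ring

lemma rev_sum (N : ℕ) :
    ∑ j ∈ Finset.range (N + 1), ((N + 1 - j : ℕ) : ℝ) = (N + 1) * (N + 2) / 2 := by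
  rw [← gauss_sum N, ← Finset.sum_range_reflect (fun j => (j : ℝ) + 1) (N + 1)]
  refine Finset.sum_congr rfl fun j hj => ?_
  rw [Finset.mem_range] at hj
  have h : N + 1 - j = (N + 1 - 1 - j) + 1 := by omega
  rw [h]; push_cast; ring

lemma wsum_full (N : ℕ) :
    ∑ j ∈ Finset.range (N + 1), (N.choose j : ℝ) *
      ((j.factorial * (N + 1 - j - 1).factorial : ℝ) / ((N + 1).factorial : ℝ)) = 1 := by
  have h : ∀ j ∈ Finset.range (N + 1), (N.choose j : ℝ) *
      ((j.factorial * (N + 1 - j - 1).factorial : ℝ) / ((N + 1).factorial : ℝ))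
      = (N.factorial : ℝ) / ((N + 1).factorial : ℝ) := by
    intro j hj
    rw [Finset.mem_range] at hj
    have hjN : j ≤ N := by omega
    have hc := Nat.choose_mul_factorial_mul_factorial hjN
    have h2 : N + 1 - j - 1 = N - j := by omega
    rw [h2]
    have hcc : (N.choose j : ℝ) * ((j.factorial : ℝ) * ((N - j).factorial : ℝ))
        = (N.factorial : ℝ) := by rw [← mul_assoc]; exact_mod_cast hc
    rw [mul_div_assoc'] at *
    rw [hcc]
  rw [Finset.sum_congr rfl h, Finset.sum_const, Finset.card_range, nsmul_eq_mul]
  have hfac : ((N + 1).factorial : ℝ) = (N + 1) * (N.factorial : ℝ) := by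
    rw [Nat.factorial_succ]; push_cast; ring
  have h0 : (N.factorial : ℝ) ≠ 0 := Nat.cast_ne_zero.mpr (Nat.factorial_ne_zero N)
  rw [hfac]
  field_simp
  norm_num

lemma wsum_half_a (N : ℕ) :
    ∑ j ∈ Finset.range (N + 1), (N.choose j : ℝ) *
      ((j.factorial * (N + 2 - j - 1).factorial : ℝ) / ((N + 2).factorial : ℝ)) = 1 / 2 := by
  have h : ∀ j ∈ Finset.range (N + 1), (N.choose j : ℝ) *
      ((j.factorial * (N + 2 - j - 1).factorial : ℝ) / ((N + 2).factorial : ℝ))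
      = (N.factorial : ℝ) / ((N + 2).factorial : ℝ) * ((N + 1 - j : ℕ) : ℝ) := by
    intro j hj
    rw [Finset.mem_range] at hj
    have hjN : j ≤ N := by omega
    have hc := Nat.choose_mul_factorial_mul_factorial hjN
    have h2 : N + 2 - j - 1 = (N - j) + 1 := by omega
    have h3 : (N - j) + 1 = N + 1 - j := by omega
    rw [h2, Nat.factorial_succ, h3]
    have hcc : (N.choose j : ℝ) * ((j.factorial : ℝ) * ((N - j).factorial : ℝ))
        = (N.factorial : ℝ) := by rw [← mul_assoc]; exact_mod_cast hc
    push_cast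
    field_simp
    nlinarith [hcc]
  rw [Finset.sum_congr rfl h, ← Finset.mul_sum, rev_sum]
  have hfac : ((N + 2).factorial : ℝ) = (N + 2) * ((N + 1) * (N.factorial : ℝ)) := by
    rw [Nat.factorial_succ, Nat.factorial_succ]; push_cast; ring
  have h0 : (N.factorial : ℝ) ≠ 0 := Nat.cast_ne_zero.mpr (Nat.factorial_ne_zero N)
  rw [hfac]
  field_simp

lemma wsum_half_b (N : ℕ) :
    ∑ j ∈ Finset.range (N + 1), (N.choose j : ℝ) *
      (((j + 1).factorial * (N + 2 - (j + 1) - 1).factorial : ℝ) / ((N + 2).factorial : ℝ))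
      = 1 / 2 := by
  have h : ∀ j ∈ Finset.range (N + 1), (N.choose j : ℝ) *
      (((j + 1).factorial * (N + 2 - (j + 1) - 1).factorial : ℝ) / ((N + 2).factorial : ℝ))
      = (N.factorial : ℝ) / ((N + 2).factorial : ℝ) * ((j : ℝ) + 1) := by
    intro j hj
    rw [Finset.mem_range] at hj
    have hjN : j ≤ N := by omega
    have hc := Nat.choose_mul_factorial_mul_factorial hjN
    have h2 : N + 2 - (j + 1) - 1 = N - j := by omega
    rw [h2, Nat.factorial_succ]
    have hcc : (N.choose j : ℝ) * ((j.factorial : ℝ) * ((N - j).factorial : ℝ))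
        = (N.factorial : ℝ) := by rw [← mul_assoc]; exact_mod_cast hc
    push_cast
    field_simp
    nlinarith [hcc]
  rw [Finset.sum_congr rfl h, ← Finset.mul_sum, gauss_sum]
  have hfac : ((N + 2).factorial : ℝ) = (N + 2) * ((N + 1) * (N.factorial : ℝ)) := by
    rw [Nat.factorial_succ, Nat.factorial_succ]; push_cast; ring
  have h0 : (N.factorial : ℝ) ≠ 0 := Nat.cast_ne_zero.mpr (Nat.factorial_ne_zero N)
  rw [hfac]
  field_simp

/-! ### Weight sums over the powerset -/

lemma weight_sum_one (n : ℕ) (hn : 1 ≤ n) (i : Fin n) :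
    ∑ S ∈ (Finset.univ.erase i).powerset,
      ((S.card.factorial * (n - S.card - 1).factorial : ℝ) / (n.factorial : ℝ)) = 1 := by
  obtain ⟨N, rfl⟩ : ∃ N, n = N + 1 := ⟨n - 1, by omega⟩
  have hcard : (Finset.univ.erase i).card = N := by
    rw [Finset.card_erase_of_mem (Finset.mem_univ i), Finset.card_univ, Fintype.card_fin]
    omega
  rw [sum_powerset_card (Finset.univ.erase i)
    (fun s => ((s.factorial * (N + 1 - s - 1).factorial : ℝ) / ((N + 1).factorial : ℝ))), hcard]
  exact wsum_full N

lemma weight_patch_sum (n : ℕ) (a b : Fin n → ℝ) (i k : Fin n) (hik : k ≠ i) :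
    ∑ S ∈ (Finset.univ.erase i).powerset,
      ((S.card.factorial * (n - S.card - 1).factorial : ℝ) / (n.factorial : ℝ)) * patch b a S k
      = (a k + b k) / 2 := by
  have h2 : 2 ≤ n := by
    have h1 := k.isLt; have h2 := i.isLt
    by_contra h; push_neg at h
    exact hik (Fin.ext (by omega))
  obtain ⟨N, rfl⟩ : ∃ N, n = N + 2 := ⟨n - 2, by omega⟩
  have hkE : k ∈ Finset.univ.erase i := Finset.mem_erase.mpr ⟨hik, Finset.mem_univ k⟩
  rw [show (Finset.univ.erase i) = insert k ((Finset.univ.erase i).erase k) from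
    (Finset.insert_erase hkE).symm,
    Finset.sum_powerset_insert (Finset.notMem_erase k _)]
  have hcard : ((Finset.univ.erase i).erase k).card = N := by
    rw [Finset.card_erase_of_mem hkE, Finset.card_erase_of_mem (Finset.mem_univ i),
      Finset.card_univ, Fintype.card_fin]
    omega
  have hsum1 : ∑ S ∈ ((Finset.univ.erase i).erase k).powerset,
      ((S.card.factorial * (N + 2 - S.card - 1).factorial : ℝ) / ((N + 2).factorial : ℝ))
        * patch b a S k
      = (1 / 2) * a k := by
    have hc : ∀ S ∈ ((Finset.univ.erase i).erase k).powerset,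
        ((S.card.factorial * (N + 2 - S.card - 1).factorial : ℝ) / ((N + 2).factorial : ℝ))
          * patch b a S k
        = ((S.card.factorial * (N + 2 - S.card - 1).factorial : ℝ) / ((N + 2).factorial : ℝ))
          * a k := by
      intro S hS
      have hkS : k ∉ S := fun hk =>
        Finset.notMem_erase k _ ((Finset.mem_powerset.mp hS) hk)
      simp [patch, hkS]
    rw [Finset.sum_congr rfl hc, ← Finset.sum_mul,
      sum_powerset_card ((Finset.univ.erase i).erase k)
        (fun s => ((s.factorial * (N + 2 - s - 1).factorial : ℝ) / ((N + 2).factorial : ℝ))),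
      hcard, wsum_half_a N]
  have hsum2 : ∑ S ∈ ((Finset.univ.erase i).erase k).powerset,
      (((insert k S).card.factorial * (N + 2 - (insert k S).card - 1).factorial : ℝ)
        / ((N + 2).factorial : ℝ)) * patch b a (insert k S) k
      = (1 / 2) * b k := by
    have hc : ∀ S ∈ ((Finset.univ.erase i).erase k).powerset,
        (((insert k S).card.factorial * (N + 2 - (insert k S).card - 1).factorial : ℝ)
          / ((N + 2).factorial : ℝ)) * patch b a (insert k S) k
        = (((S.card + 1).factorial * (N + 2 - (S.card + 1) - 1).factorial : ℝ)
          / ((N + 2).factorial : ℝ)) * b k := by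
      intro S hS
      have hkS : k ∉ S := fun hk =>
        Finset.notMem_erase k _ ((Finset.mem_powerset.mp hS) hk)
      rw [Finset.card_insert_of_notMem hkS]
      simp [patch]
    rw [Finset.sum_congr rfl hc, ← Finset.sum_mul,
      sum_powerset_card ((Finset.univ.erase i).erase k)
        (fun s => (((s + 1).factorial * (N + 2 - (s + 1) - 1).factorial : ℝ)
          / ((N + 2).factorial : ℝ))),
      hcard, wsum_half_b N]
  rw [hsum1, hsum2]; ring

/-! ### The quadratic difference identity -/

lemma quad_diff {n : ℕ} (m : Fin n → Fin n → ℝ) (i : Fin n) (q : Fin n → ℝ) (v : ℝ) :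
    (∑ j, ∑ k, m j k * Function.update q i v j * Function.update q i v k)
      - ∑ j, ∑ k, m j k * q j * q k
    = (v - q i) * ((∑ k, (m i k + m k i) * q k) + m i i * (v - q i)) := by
  classical
  have h1 : ∀ x : Fin n → ℝ,
      (∑ j, ∑ k, m j k * x j * x k)
        = (∑ j ∈ Finset.univ.erase i, ∑ k ∈ Finset.univ.erase i, m j k * x j * x k)
          + (∑ j ∈ Finset.univ.erase i, m j i * x j) * x i
          + x i * (∑ k ∈ Finset.univ.erase i, m i k * x k)
          + m i i * x i * x i := by
    intro x
    have inner : ∀ j : Fin n, (∑ k, m j k * x j * x k)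
        = (∑ k ∈ Finset.univ.erase i, m j k * x j * x k) + m j i * x j * x i :=
      fun j => (Finset.sum_erase_add _ _ (Finset.mem_univ i)).symm
    rw [← Finset.sum_erase_add _ _ (Finset.mem_univ i), inner i]
    have houter : (∑ j ∈ Finset.univ.erase i, ∑ k, m j k * x j * x k)
        = ∑ j ∈ Finset.univ.erase i,
            ((∑ k ∈ Finset.univ.erase i, m j k * x j * x k) + (m j i * x j) * x i) :=
      Finset.sum_congr rfl fun j _ => by rw [inner j]
    rw [houter, Finset.sum_add_distrib, ← Finset.sum_mul]
    have hx : (∑ k ∈ Finset.univ.erase i, m i k * x i * x k)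
        = x i * ∑ k ∈ Finset.univ.erase i, m i k * x k := by
      rw [Finset.mul_sum]; exact Finset.sum_congr rfl fun k _ => by ring
    rw [hx]; ring
  rw [h1 (Function.update q i v), h1 q]
  have e0 : Function.update q i v i = v := Function.update_self i v q
  have e1 : (∑ j ∈ Finset.univ.erase i, ∑ k ∈ Finset.univ.erase i,
      m j k * Function.update q i v j * Function.update q i v k)
      = ∑ j ∈ Finset.univ.erase i, ∑ k ∈ Finset.univ.erase i, m j k * q j * q k :=
    Finset.sum_congr rfl fun j hj => Finset.sum_congr rfl fun k hk => by
      rw [Function.update_of_ne (Finset.ne_of_mem_erase hj),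
        Function.update_of_ne (Finset.ne_of_mem_erase hk)]
  have e2 : (∑ j ∈ Finset.univ.erase i, m j i * Function.update q i v j)
      = ∑ j ∈ Finset.univ.erase i, m j i * q j :=
    Finset.sum_congr rfl fun j hj => by
      rw [Function.update_of_ne (Finset.ne_of_mem_erase hj)]
  have e3 : (∑ k ∈ Finset.univ.erase i, m i k * Function.update q i v k)
      = ∑ k ∈ Finset.univ.erase i, m i k * q k :=
    Finset.sum_congr rfl fun k hk => by
      rw [Function.update_of_ne (Finset.ne_of_mem_erase hk)]
  rw [e0, e1, e2, e3, ← Finset.sum_erase_add _ _ (Finset.mem_univ i)]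
  have e4 : (∑ k ∈ Finset.univ.erase i, (m i k + m k i) * q k)
      = (∑ k ∈ Finset.univ.erase i, m i k * q k)
        + ∑ k ∈ Finset.univ.erase i, m k i * q k := by
    rw [← Finset.sum_add_distrib]
    exact Finset.sum_congr rfl fun k _ => by ring
  rw [e4]
  ring

/-! ### Main theorem -/

theorem BS_bilinear_closed_form (n : ℕ) (hn : 1 ≤ n) (m : Fin n → Fin n → ℝ)
    (f : (Fin n → ℝ) → ℝ)
    (hf : f = fun x => ∑ j, ∑ k, m j k * x j * x k)
    (a b : Fin n → ℝ) (i : Fin n) :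
    BS f b a i = (b i - a i) * ∑ j, (m i j + m j i) * (a j + b j) / 2 := by
  classical
  subst hf
  unfold BS
  have hpatch : ∀ S : Finset (Fin n),
      patch b a (insert i S) = Function.update (patch b a S) i (b i) := by
    intro S
    funext j
    by_cases h : j = i
    · subst h; simp [patch, Function.update_self]
    · simp [patch, Function.update_of_ne h, Finset.mem_insert, h]
  have hdiff : ∀ S ∈ (Finset.univ.erase i).powerset,
      ((S.card.factorial * (n - S.card - 1).factorial : ℝ) / (n.factorial : ℝ)) *
        ((fun x => ∑ j, ∑ k, m j k * x j * x k) (patch b a (insert i S))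
          - (fun x => ∑ j, ∑ k, m j k * x j * x k) (patch b a S))
      = (b i - a i) *
          (((S.card.factorial * (n - S.card - 1).factorial : ℝ) / (n.factorial : ℝ)) *
            (∑ k, (m i k + m k i) * patch b a S k))
        + ((b i - a i) * (m i i * (b i - a i))) *
          ((S.card.factorial * (n - S.card - 1).factorial : ℝ) / (n.factorial : ℝ)) := by
    intro S hS
    have hiS : i ∉ S := fun hi =>
      (Finset.notMem_erase i _) ((Finset.mem_powerset.mp hS) hi)
    have hqi : patch b a S i = a i := by simp [patch, hiS]
    have := quad_diff m i (patch b a S) (b i)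
    rw [← hpatch S] at this
    simp only []
    rw [this, hqi]
    ring
  rw [Finset.sum_congr rfl hdiff, Finset.sum_add_distrib, ← Finset.mul_sum, ← Finset.mul_sum,
    weight_sum_one n hn i]
  have hswap : (∑ S ∈ (Finset.univ.erase i).powerset,
      ((S.card.factorial * (n - S.card - 1).factorial : ℝ) / (n.factorial : ℝ)) *
        (∑ k, (m i k + m k i) * patch b a S k))
      = ∑ k, (m i k + m k i) *
          (∑ S ∈ (Finset.univ.erase i).powerset,
            ((S.card.factorial * (n - S.card - 1).factorial : ℝ) / (n.factorial : ℝ)) *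
              patch b a S k) := by
    calc (∑ S ∈ (Finset.univ.erase i).powerset,
        ((S.card.factorial * (n - S.card - 1).factorial : ℝ) / (n.factorial : ℝ)) *
          (∑ k, (m i k + m k i) * patch b a S k))
        = ∑ S ∈ (Finset.univ.erase i).powerset, ∑ k, (m i k + m k i) *
            (((S.card.factorial * (n - S.card - 1).factorial : ℝ) / (n.factorial : ℝ)) *
              patch b a S k) := by
          refine Finset.sum_congr rfl fun S _ => ?_
          rw [Finset.mul_sum]
          exact Finset.sum_congr rfl fun k _ => by ring
      _ = ∑ k, ∑ S ∈ (Finset.univ.erase i).powerset, (m i k + m k i) *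
            (((S.card.factorial * (n - S.card - 1).factorial : ℝ) / (n.factorial : ℝ)) *
              patch b a S k) := Finset.sum_comm
      _ = ∑ k, (m i k + m k i) *
            (∑ S ∈ (Finset.univ.erase i).powerset,
              ((S.card.factorial * (n - S.card - 1).factorial : ℝ) / (n.factorial : ℝ)) *
                patch b a S k) := Finset.sum_congr rfl fun k _ => (Finset.mul_sum _ _ _).symm
  rw [hswap]
  have hu : ∀ k : Fin n, (∑ S ∈ (Finset.univ.erase i).powerset,
      ((S.card.factorial * (n - S.card - 1).factorial : ℝ) / (n.factorial : ℝ)) *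
        patch b a S k)
      = if k = i then a i else (a k + b k) / 2 := by
    intro k
    by_cases hk : k = i
    · subst hk
      simp only [if_pos rfl]
      have hc : ∀ S ∈ (Finset.univ.erase k).powerset,
          ((S.card.factorial * (n - S.card - 1).factorial : ℝ) / (n.factorial : ℝ)) *
            patch b a S k
          = ((S.card.factorial * (n - S.card - 1).factorial : ℝ) / (n.factorial : ℝ)) * a k := by
        intro S hS
        have hiS : k ∉ S := fun hi =>
          (Finset.notMem_erase k _) ((Finset.mem_powerset.mp hS) hi)
        simp [patch, hiS]
      rw [Finset.sum_congr rfl hc, ← Finset.sum_mul, weight_sum_one n hn k, one_mul]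
      simp
    · rw [if_neg hk]
      exact weight_patch_sum n a b i k hk
  have hR : (∑ j, (m i j + m j i) * (a j + b j) / 2)
      = (∑ j ∈ Finset.univ.erase i, (m i j + m j i) * (a j + b j) / 2)
        + (m i i + m i i) * (a i + b i) / 2 :=
    (Finset.sum_erase_add _ _ (Finset.mem_univ i)).symm
  have hl : (∑ k, (m i k + m k i) *
      (∑ S ∈ (Finset.univ.erase i).powerset,
        ((S.card.factorial * (n - S.card - 1).factorial : ℝ) / (n.factorial : ℝ)) *
          patch b a S k))
      = ∑ k, (m i k + m k i) * (if k = i then a i else (a k + b k) / 2) :=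
    Finset.sum_congr rfl fun k _ => by rw [hu k]
  rw [hl, hR, ← Finset.sum_erase_add Finset.univ
    (fun k => (m i k + m k i) * (if k = i then a i else (a k + b k) / 2))
    (Finset.mem_univ i)]
  have he : (∑ k ∈ Finset.univ.erase i,
      (m i k + m k i) * (if k = i then a i else (a k + b k) / 2))
      = ∑ k ∈ Finset.univ.erase i, (m i k + m k i) * (a k + b k) / 2 := by
    refine Finset.sum_congr rfl fun k hk => ?_
    rw [if_neg (Finset.ne_of_mem_erase hk)]
    ring
  rw [he, if_pos rfl]
  ring
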